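/- Let n ≥ 1 and let f, g : [0,1]^n → ℝ. For intervals [t_i^1, t_i^2] ⊂ [0,1], the rectangular increment of the pointwise product satisfies (fg)(∏_{i=1}^n [t_i^1,t_i^2]) = ∑_{A ⊆ {1,...,n}} f(t_a^2, [t_r^1,t_r^2] ; a ∈ A, r ∈ A^c) · g(t_r^1, [t_a^1,t_a^2] ; r ∈ A^c, a ∈ A), where the sum is over all subsets A of {1,...,n}, and the notation means: in f, the coordinates in A are evaluated at the right endpoints t_a^2 while the coordinates in A^c are incremented over [t_r^1,t_r^2]; in g, coordinates in A^c are evaluated at the left endpoints t_r^1 while coordinates in A are incremented. -/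
import Mathlib


open Finset

/-- Mixed rectangular increment of an `n`-variable function `h`: the
coordinates in `A` are fixed at the value `fix`, while the function is given
the rectangular increment between `a` and `b` in the coordinates of `Aᶜ`:
`∑_{S ⊆ Aᶜ} (-1)^{|Aᶜ| - |S|} h(fix on A, b on S, a on Aᶜ \ S)`. -/
def mixedIncr {n : ℕ} (h : (Fin n → ℝ) → ℝ) (A : Finset (Fin n))
    (fix a b : Fin n → ℝ) : ℝ :=
  ∑ S ∈ Aᶜ.powerset,
    (-1 : ℝ) ^ (Aᶜ.card - S.card) *
      h (fun i => if i ∈ A then fix i else if i ∈ S then b i else a i)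

lemma key_sum {n : ℕ} (S' B : Finset (Fin n)) :
    (∑ A : Finset (Fin n),
      if S' ⊆ A ∧ A ⊆ B then ((-1 : ℝ) ^ (A.card - S'.card)) else 0)
      = if S' = B then 1 else 0 := by
  by_cases hSB : S' ⊆ B
  swap
  · rw [Finset.sum_eq_zero, if_neg (by rintro rfl; exact hSB le_rfl)]
    intro A _
    rw [if_neg]
    rintro ⟨h1, h2⟩
    exact hSB (h1.trans h2)
  rw [← Finset.sum_filter]
  have hf : Finset.univ.filter (fun A : Finset (Fin n) => S' ⊆ A ∧ A ⊆ B)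
      = Finset.Icc S' B := by
    ext A; simp [Finset.mem_Icc]
  rw [hf]
  have hbij : ∑ A ∈ Finset.Icc S' B, ((-1 : ℝ) ^ (A.card - S'.card))
      = ∑ C ∈ (B \ S').powerset, (-1 : ℝ) ^ C.card := by
    refine Finset.sum_nbij' (fun A => A \ S') (fun C => S' ∪ C) ?_ ?_ ?_ ?_ ?_
    · intro A hA
      rw [Finset.mem_Icc] at hA
      simp only [Finset.mem_powerset]
      exact sdiff_le_sdiff hA.2 le_rfl
    · intro C hC
      rw [Finset.mem_powerset] at hC
      rw [Finset.mem_Icc]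
      exact ⟨Finset.subset_union_left,
        Finset.union_subset hSB (hC.trans Finset.sdiff_subset)⟩
    · intro A hA
      rw [Finset.mem_Icc] at hA
      exact Finset.union_sdiff_of_subset hA.1
    · intro C hC
      rw [Finset.mem_powerset] at hC
      exact Finset.union_sdiff_cancel_left (Finset.disjoint_sdiff.mono_right hC)
    · intro A hA
      rw [Finset.mem_Icc] at hA
      rw [Finset.card_sdiff_of_subset hA.1]
  rw [hbij]
  have hZ := Finset.sum_powerset_neg_one_pow_card (x := B \ S')
  have hcast : (∑ C ∈ (B \ S').powerset, (-1 : ℝ) ^ C.card)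
      = ((∑ C ∈ (B \ S').powerset, (-1 : ℤ) ^ C.card : ℤ) : ℝ) := by push_cast; rfl
  rw [hcast, hZ]
  have hiff : B \ S' = ∅ ↔ S' = B := by
    rw [Finset.sdiff_eq_empty_iff_subset]
    exact ⟨fun h => le_antisymm hSB h, fun h => h.ge⟩
  by_cases h : S' = B
  · simp [h, hiff.2 h]
  · simp only [if_neg h, if_neg (fun he => h (hiff.1 he))]
    norm_num

lemma f_part {n : ℕ} (f : (Fin n → ℝ) → ℝ) (t₁ t₂ : Fin n → ℝ)
    (A : Finset (Fin n)) :
    mixedIncr f A t₂ t₁ t₂ =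
      ∑ B : Finset (Fin n), (if A ⊆ B then
        (-1 : ℝ) ^ (n - B.card) * f (fun i => if i ∈ B then t₂ i else t₁ i)
        else 0) := by
  rw [← Finset.sum_filter]
  unfold mixedIncr
  refine Finset.sum_nbij' (fun S => A ∪ S) (fun B => B \ A) ?_ ?_ ?_ ?_ ?_
  · intro S hS
    simp [Finset.subset_union_left]
  · intro B hB
    simp only [Finset.mem_filter, Finset.mem_univ, true_and] at hB
    simp only [Finset.mem_powerset]
    intro i hi
    simp only [Finset.mem_sdiff] at hi
    simp [hi.2]
  · intro S hS
    rw [Finset.mem_powerset] at hS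
    have : Disjoint A S := by
      rw [Finset.disjoint_left]
      intro i hi hiS
      have := hS hiS
      simp at this
      exact this hi
    exact Finset.union_sdiff_cancel_left this
  · intro B hB
    simp only [Finset.mem_filter, Finset.mem_univ, true_and] at hB
    exact Finset.union_sdiff_of_subset hB
  · intro S hS
    rw [Finset.mem_powerset] at hS
    have hdisj : Disjoint A S := by
      rw [Finset.disjoint_left]
      intro i hi hiS
      have := hS hiS
      simp at this
      exact this hi
    have hcard : (A ∪ S).card = A.card + S.card :=
      Finset.card_union_of_disjoint hdisj
    have hcompl : Aᶜ.card = n - A.card := by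
      rw [Finset.card_compl, Fintype.card_fin]
    have hSA : S.card ≤ n - A.card := by
      rw [← hcompl]; exact Finset.card_le_card hS
    have hexp : Aᶜ.card - S.card = n - (A ∪ S).card := by
      rw [hcompl, hcard, Nat.sub_sub]
    rw [hexp]
    congr 1
    congr 1
    funext i
    by_cases hiA : i ∈ A <;> by_cases hiS : i ∈ S <;>
      simp [hiA, hiS, Finset.mem_union]

lemma g_part {n : ℕ} (g : (Fin n → ℝ) → ℝ) (t₁ t₂ : Fin n → ℝ)
    (A : Finset (Fin n)) :
    mixedIncr g Aᶜ t₁ t₁ t₂ =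
      ∑ S' : Finset (Fin n), (if S' ⊆ A then
        (-1 : ℝ) ^ (A.card - S'.card) * g (fun i => if i ∈ S' then t₂ i else t₁ i)
        else 0) := by
  rw [← Finset.sum_filter]
  unfold mixedIncr
  rw [compl_compl]
  have : Finset.univ.filter (fun S' : Finset (Fin n) => S' ⊆ A) = A.powerset := by
    ext S'; simp
  rw [this]
  refine Finset.sum_congr rfl fun S' hS' => ?_
  rw [Finset.mem_powerset] at hS'
  refine congrArg _ (congrArg g ?_)
  funext i
  by_cases hiA : i ∈ A <;> by_cases hiS : i ∈ S' <;>
    first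
    | exact absurd (hS' hiS) hiA
    | simp [hiA, hiS]

/-- Leibniz-type formula for the rectangular increment of a product:
`(fg)(∏[t¹ᵢ,t²ᵢ]) = ∑_{A ⊆ {1,…,n}} f(t² on A, incremented on Aᶜ) ·
g(t¹ on Aᶜ, incremented on A)`. -/
theorem rectIncr_mul (n : ℕ) (hn : 1 ≤ n) (f g : (Fin n → ℝ) → ℝ)
    (t₁ t₂ : Fin n → ℝ) :
    mixedIncr (fun u => f u * g u) (∅ : Finset (Fin n)) t₁ t₁ t₂ =
      ∑ A : Finset (Fin n),
        mixedIncr f A t₂ t₁ t₂ * mixedIncr g Aᶜ t₁ t₁ t₂ := by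
  have hL : mixedIncr (fun u => f u * g u) (∅ : Finset (Fin n)) t₁ t₁ t₂ =
      ∑ B : Finset (Fin n), (-1 : ℝ) ^ (n - B.card) *
        (f (fun i => if i ∈ B then t₂ i else t₁ i) *
         g (fun i => if i ∈ B then t₂ i else t₁ i)) := by
    unfold mixedIncr
    rw [Finset.compl_empty, Finset.powerset_univ]
    refine Finset.sum_congr rfl fun B _ => ?_
    simp [Finset.card_univ]
  rw [hL]
  have hR : ∀ A : Finset (Fin n),
      mixedIncr f A t₂ t₁ t₂ * mixedIncr g Aᶜ t₁ t₁ t₂ =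
      ∑ B : Finset (Fin n), ∑ S' : Finset (Fin n),
        (if S' ⊆ A ∧ A ⊆ B then
          ((-1 : ℝ) ^ (n - B.card) * f (fun i => if i ∈ B then t₂ i else t₁ i) *
            g (fun i => if i ∈ S' then t₂ i else t₁ i)) *
          (-1 : ℝ) ^ (A.card - S'.card)
        else 0) := by
    intro A
    rw [f_part f t₁ t₂ A, g_part g t₁ t₂ A, Finset.sum_mul_sum]
    refine Finset.sum_congr rfl fun B _ => Finset.sum_congr rfl fun S' _ => ?_
    by_cases h1 : A ⊆ B <;> by_cases h2 : S' ⊆ A <;> simp [h1, h2] <;> ring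
  simp_rw [hR]
  rw [Finset.sum_comm]
  refine Finset.sum_congr rfl fun B _ => ?_
  rw [Finset.sum_comm]
  have : ∀ S' : Finset (Fin n),
      (∑ A : Finset (Fin n),
        (if S' ⊆ A ∧ A ⊆ B then
          ((-1 : ℝ) ^ (n - B.card) * f (fun i => if i ∈ B then t₂ i else t₁ i) *
            g (fun i => if i ∈ S' then t₂ i else t₁ i)) *
          (-1 : ℝ) ^ (A.card - S'.card)
        else 0)) =
      if S' = B then
        (-1 : ℝ) ^ (n - B.card) * f (fun i => if i ∈ B then t₂ i else t₁ i) *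
          g (fun i => if i ∈ S' then t₂ i else t₁ i)
      else 0 := by
    intro S'
    have := key_sum S' B
    calc (∑ A : Finset (Fin n),
        (if S' ⊆ A ∧ A ⊆ B then
          ((-1 : ℝ) ^ (n - B.card) * f (fun i => if i ∈ B then t₂ i else t₁ i) *
            g (fun i => if i ∈ S' then t₂ i else t₁ i)) *
          (-1 : ℝ) ^ (A.card - S'.card)
        else 0))
        = ((-1 : ℝ) ^ (n - B.card) * f (fun i => if i ∈ B then t₂ i else t₁ i) *
            g (fun i => if i ∈ S' then t₂ i else t₁ i)) *
          (∑ A : Finset (Fin n),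
            if S' ⊆ A ∧ A ⊆ B then ((-1 : ℝ) ^ (A.card - S'.card)) else 0) := by
          rw [Finset.mul_sum]
          refine Finset.sum_congr rfl fun A _ => ?_
          by_cases h : S' ⊆ A ∧ A ⊆ B <;> simp [h]
      _ = _ := by rw [this]; by_cases h : S' = B <;> simp [h]
  simp_rw [this]
  rw [Finset.sum_ite_eq' Finset.univ B]
  simp [mul_assoc]
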